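/- arXiv:0908.1227 — 2 statements merged into one kernel-verified Lean document; each statement's English description precedes it below -/
import Mathlib

section
/- Let λ > 0, χ > 0, and let Ω ⊂ ℝⁿ be a bounded domain with B_R ⊂ Ω for some R > 0. Let 0 ≤ u₀ ≤ a in Ω for some constant 0 < a < 1, and let 0 ≤ u < 1 be a solution of (P_λ) on Ω×(0,T) with sup_{0≤t<T} ∫_Ω dz/(1−u(z,t)) < ∞. Set A(t) = (1 + χ∫_Ω dz/(1−u(z,t)))^{−2}, and let 0 < δ₁ ≤ inf_{0≤t<T} A(t). If λ > 2n/(δ₁R²), then T ≤ (1/(λδ₁))·(1 − 2n/(λδ₁R²))^{−1}. -/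
open MeasureTheory Metric Set Filter Topology

/-- The Laplacian of a function on Euclidean space, written as the sum of
second partial derivatives along the coordinate directions. -/
noncomputable def lap {n : ℕ} (f : EuclideanSpace ℝ (Fin n) → ℝ)
    (x : EuclideanSpace ℝ (Fin n)) : ℝ :=
  ∑ i : Fin n, fderiv ℝ (fun y => fderiv ℝ f y (EuclideanSpace.single i 1)) x
    (EuclideanSpace.single i 1)

/-- The nonlocal MEMS nonlinearity `λ / ((1-u)² (1 + χ ∫_Ω dy/(1-u))²)`. -/
noncomputable def nonlocalRHS {n : ℕ} (lam chi : ℝ) (Ω : Set (EuclideanSpace ℝ (Fin n)))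
    (w : EuclideanSpace ℝ (Fin n) → ℝ) (x : EuclideanSpace ℝ (Fin n)) : ℝ :=
  lam / ((1 - w x) ^ 2 * (1 + chi * ∫ y in Ω, 1 / (1 - w y)) ^ 2)

/-- `u` is a solution of the nonlocal parabolic MEMS problem (P_λ) on `Ω × (0,T)`
with initial value `u₀`. -/
structure IsSolutionP {n : ℕ} (lam chi : ℝ) (Ω : Set (EuclideanSpace ℝ (Fin n)))
    (u₀ : EuclideanSpace ℝ (Fin n) → ℝ) (u : EuclideanSpace ℝ (Fin n) → ℝ → ℝ)
    (T : ℝ) : Prop where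
  cont : ContinuousOn (fun p : EuclideanSpace ℝ (Fin n) × ℝ => u p.1 p.2)
    (closure Ω ×ˢ Ioo 0 T)
  space_reg : ∀ t ∈ Ioo (0:ℝ) T, ContDiffOn ℝ 2 (fun y => u y t) Ω
  lt_one : ∀ x ∈ closure Ω, ∀ t ∈ Ioo (0:ℝ) T, u x t < 1
  sup_lt_one : ∀ T' ∈ Ioo (0:ℝ) T, ∃ M, M < 1 ∧ ∀ x ∈ closure Ω, ∀ t ∈ Ioc (0:ℝ) T', u x t ≤ M
  pde : ∀ x ∈ Ω, ∀ t ∈ Ioo (0:ℝ) T,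
    HasDerivAt (fun s => u x s)
      (lap (fun y => u y t) x + nonlocalRHS lam chi Ω (fun y => u y t) x) t
  bdry : ∀ x ∈ frontier Ω, ∀ t ∈ Ioo (0:ℝ) T, u x t = 0
  init : Tendsto (fun t => ∫ x in Ω, |u x t - u₀ x|) (𝓝[>] (0:ℝ)) (𝓝 0)

/-- A bounded domain of class C²: an open connected set which near every boundary
point is the sublevel set of a C² defining function with nonvanishing gradient. -/
def IsC2Domain {n : ℕ} (Ω : Set (EuclideanSpace ℝ (Fin n))) : Prop :=
  IsOpen Ω ∧ IsConnected Ω ∧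
    ∀ x ∈ frontier Ω, ∃ (V : Set (EuclideanSpace ℝ (Fin n)))
      (ρ : EuclideanSpace ℝ (Fin n) → ℝ),
      x ∈ V ∧ IsOpen V ∧ ContDiff ℝ 2 ρ ∧ (∀ y ∈ V, fderiv ℝ ρ y ≠ 0) ∧
      Ω ∩ V = {y ∈ V | ρ y < 0} ∧ frontier Ω ∩ V = {y ∈ V | ρ y = 0}

/-- The boundary collar `Ω_δ = {x ∈ Ω : dist(x, ∂Ω) < δ}`. -/
def collar {n : ℕ} (Ω : Set (EuclideanSpace ℝ (Fin n))) (δ : ℝ) :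
    Set (EuclideanSpace ℝ (Fin n)) :=
  {x ∈ Ω | infDist x (frontier Ω) < δ}

/-- `ν` is a unit outward normal vector to `Ω` at the boundary point `x`. -/
def IsOutwardNormal {n : ℕ} (Ω : Set (EuclideanSpace ℝ (Fin n)))
    (x ν : EuclideanSpace ℝ (Fin n)) : Prop :=
  ‖ν‖ = 1 ∧ ∃ ε > 0, ∀ s : ℝ, 0 < s → s < ε →
    x + s • ν ∉ closure Ω ∧ x - s • ν ∈ Ω

/-- `u` quenches (touches down) at time `T`:  `sup_Ω u(·,t) < 1` for `0 < t < T`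
and `sup_Ω u(·,t) → 1` as `t ↗ T`. -/
def QuenchesAt {n : ℕ} (Ω : Set (EuclideanSpace ℝ (Fin n)))
    (u : EuclideanSpace ℝ (Fin n) → ℝ → ℝ) (T : ℝ) : Prop :=
  (∀ t ∈ Ioo (0:ℝ) T, sSup ((fun x => u x t) '' Ω) < 1) ∧
  Tendsto (fun t => sSup ((fun x => u x t) '' Ω)) (𝓝[<] T) (𝓝 1)

/-- `x` is a quenching (touchdown) point of `u`. -/
def IsQuenchPoint {n : ℕ} (Ω : Set (EuclideanSpace ℝ (Fin n)))
    (u : EuclideanSpace ℝ (Fin n) → ℝ → ℝ) (T : ℝ)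
    (x : EuclideanSpace ℝ (Fin n)) : Prop :=
  x ∈ Ω ∧ ∃ (xk : ℕ → EuclideanSpace ℝ (Fin n)) (tk : ℕ → ℝ),
    (∀ k, xk k ∈ Ω ∧ tk k ∈ Ioo (0:ℝ) T) ∧
    Tendsto xk atTop (𝓝 x) ∧ Tendsto (fun k => u (xk k) (tk k)) atTop (𝓝 1)

/-- `C` is a cone with vertex `y` (star-shaped about `y`). -/
def IsConeWithVertex {n : ℕ} (y : EuclideanSpace ℝ (Fin n))
    (C : Set (EuclideanSpace ℝ (Fin n))) : Prop :=
  y ∈ C ∧ ∀ z ∈ C, segment ℝ y z ⊆ C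

lemma deriv_nonpos_of_left_min' {ψ : ℝ → ℝ} {d t₀ t₁ : ℝ} (h01 : t₀ < t₁)
    (hd : HasDerivAt ψ d t₁) (hmin : ∀ t ∈ Ico t₀ t₁, ψ t₁ ≤ ψ t) : d ≤ 0 := by
  have hs : Tendsto (slope ψ t₁) (𝓝[<] t₁) (𝓝 d) :=
    (hasDerivAt_iff_tendsto_slope.1 hd).mono_left
      (nhdsWithin_mono _ (fun t ht => ne_of_lt ht))
  refine le_of_tendsto hs ?_
  have h1 : ∀ᶠ t in 𝓝[<] t₁, t₀ < t :=
    eventually_nhdsWithin_of_eventually_nhds (eventually_gt_nhds h01)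
  filter_upwards [h1, self_mem_nhdsWithin] with t ht ht'
  have hnum : 0 ≤ ψ t - ψ t₁ := sub_nonneg.2 (hmin t ⟨ht.le, ht'⟩)
  have hden : t - t₁ < 0 := sub_neg.2 ht'
  rw [slope_def_field]
  exact div_nonpos_of_nonneg_of_nonpos hnum hden.le

lemma second_deriv_nonneg_of_isLocalMin' {h g : ℝ → ℝ} {c : ℝ}
    (hd : ∀ᶠ s in 𝓝 (0:ℝ), HasDerivAt h (g s) s)
    (hd2 : HasDerivAt g c 0) (hmin : IsLocalMin h 0) : 0 ≤ c := by
  by_contra hc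
  push_neg at hc
  have hg0 : g 0 = 0 := hmin.hasDerivAt_eq_zero hd.self_of_nhds
  have hslope : Tendsto (slope g 0) (𝓝[>] (0:ℝ)) (𝓝 c) :=
    (hasDerivAt_iff_tendsto_slope.1 hd2).mono_left
      (nhdsWithin_mono _ (fun s hs => ne_of_gt hs))
  have hneg : ∀ᶠ s in 𝓝[>] (0:ℝ), g s < 0 := by
    have h2 : ∀ᶠ s in 𝓝[>] (0:ℝ), slope g 0 s < 0 := hslope.eventually_lt_const hc
    filter_upwards [h2, self_mem_nhdsWithin] with s hs hs'
    have heq : slope g 0 s = g s / s := by rw [slope_def_field, hg0, sub_zero, sub_zero]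
    rw [heq] at hs
    rcases div_neg_iff.1 hs with ⟨_, h2'⟩ | ⟨h1', _⟩
    · exact absurd (mem_Ioi.1 hs') (not_lt.2 h2'.le)
    · exact h1'
  have hall : ∀ᶠ s in 𝓝 (0:ℝ),
      HasDerivAt h (g s) s ∧ h 0 ≤ h s ∧ (s ∈ Ioi (0:ℝ) → g s < 0) :=
    hd.and (hmin.and (eventually_nhdsWithin_iff.1 hneg))
  obtain ⟨ε, hε, hall'⟩ := Metric.eventually_nhds_iff.1 hall
  set δ := ε / 2 with hδdef
  have hδ : 0 < δ := half_pos hε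
  have hmem : ∀ s ∈ Icc (0:ℝ) δ, dist s 0 < ε := by
    intro s hs
    rw [Real.dist_eq, sub_zero, abs_of_nonneg hs.1]
    exact lt_of_le_of_lt hs.2 (half_lt_self hε)
  have hanti : StrictAntiOn h (Icc 0 δ) := by
    apply strictAntiOn_of_deriv_neg (convex_Icc 0 δ)
    · intro s hs
      exact ((hall' (hmem s hs)).1.differentiableAt).continuousAt.continuousWithinAt
    · intro s hs
      rw [interior_Icc] at hs
      rw [(hall' (hmem s ⟨hs.1.le, hs.2.le⟩)).1.deriv]
      exact (hall' (hmem s ⟨hs.1.le, hs.2.le⟩)).2.2 hs.1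
  have h1 : h δ < h 0 := hanti ⟨le_refl 0, hδ.le⟩ ⟨hδ.le, le_refl δ⟩ hδ
  have h2 : h 0 ≤ h δ := (hall' (hmem δ ⟨hδ.le, le_refl δ⟩)).2.1
  linarith

lemma second_dir_deriv' {n : ℕ} {Ω : Set (EuclideanSpace ℝ (Fin n))} (hΩ : IsOpen Ω)
    {g : EuclideanSpace ℝ (Fin n) → ℝ} (hg : ContDiffOn ℝ 2 g Ω)
    {x : EuclideanSpace ℝ (Fin n)} (hx : x ∈ Ω) (v : EuclideanSpace ℝ (Fin n)) :
    (∀ᶠ s in 𝓝 (0:ℝ), HasDerivAt (fun r : ℝ => g (x + r • v)) (fderiv ℝ g (x + s • v) v) s) ∧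
    HasDerivAt (fun s : ℝ => fderiv ℝ g (x + s • v) v)
      (fderiv ℝ (fun y => fderiv ℝ g y v) x v) 0 := by
  have hline : ∀ s : ℝ, HasDerivAt (fun r : ℝ => x + r • v) v s := by
    intro s
    have := ((hasDerivAt_id s).smul_const v).const_add x
    simpa using this
  have hcont : ∀ᶠ s in 𝓝 (0:ℝ), x + s • v ∈ Ω := by
    have hc : Continuous (fun s : ℝ => x + s • v) :=
      continuous_const.add (continuous_id.smul continuous_const)
    have h0 : (fun s : ℝ => x + s • v) 0 ∈ Ω := by simpa using hx
    exact hc.continuousAt.preimage_mem_nhds (hΩ.mem_nhds h0)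
  have hdiff : ∀ y ∈ Ω, HasFDerivAt g (fderiv ℝ g y) y := fun y hy =>
    ((hg.differentiableOn (by norm_num)).differentiableAt (hΩ.mem_nhds hy)).hasFDerivAt
  have hx0 : x + (0:ℝ) • v = x := by simp
  constructor
  · filter_upwards [hcont] with s hs
    exact (hdiff _ hs).comp_hasDerivAt s (hline s)
  · have hf1 : ContDiffOn ℝ 1 (fderiv ℝ g) Ω := hg.fderiv_of_isOpen hΩ (by norm_num)
    have dF : DifferentiableAt ℝ (fderiv ℝ g) x :=
      (hf1.differentiableOn (by norm_num)).differentiableAt (hΩ.mem_nhds hx)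
    have hdF : HasFDerivAt (fderiv ℝ g) (fderiv ℝ (fderiv ℝ g) x) (x + (0:ℝ) • v) := by
      rw [hx0]; exact dF.hasFDerivAt
    have h1 : HasDerivAt (fun s : ℝ => fderiv ℝ g (x + s • v))
        (fderiv ℝ (fderiv ℝ g) x v) 0 := hdF.comp_hasDerivAt 0 (hline 0)
    have h2 : HasDerivAt (fun s : ℝ => fderiv ℝ g (x + s • v) v)
        (fderiv ℝ (fderiv ℝ g) x v v) 0 := by
      have := (ContinuousLinearMap.apply ℝ ℝ v).hasFDerivAt.comp_hasDerivAt 0 h1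
      exact this
    have heq : fderiv ℝ (fun y => fderiv ℝ g y v) x v = fderiv ℝ (fderiv ℝ g) x v v := by
      have := fderiv_clm_apply (c := fderiv ℝ g) (u := fun _ => v) dF (differentiableAt_const v)
      rw [this]; simp
    rw [heq]; exact h2

lemma rhs_lower' {n : ℕ} {lam chi δ₁ : ℝ} {Ω : Set (EuclideanSpace ℝ (Fin n))}
    {g : EuclideanSpace ℝ (Fin n) → ℝ} {x : EuclideanSpace ℝ (Fin n)}
    (hlam : 0 < lam) (hδ : 0 < δ₁) (h0 : 0 ≤ g x) (h1 : g x < 1)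
    (hinf : δ₁ ≤ (((1:ℝ) + chi * ∫ y in Ω, 1 / (1 - g y)) ^ 2)⁻¹) :
    lam * δ₁ ≤ nonlocalRHS lam chi Ω g x := by
  set I := ∫ y in Ω, 1 / (1 - g y) with hI
  set q := ((1:ℝ) + chi * I) ^ 2 with hq
  have hq0 : 0 ≤ q := sq_nonneg _
  have hqpos : 0 < q := by
    rcases hq0.lt_or_eq with h | h
    · exact h
    · exfalso; rw [← h] at hinf; simp at hinf; linarith
  set p := ((1:ℝ) - g x) ^ 2 with hp
  have hppos : 0 < p := pow_pos (by linarith) 2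
  have hp1 : p ≤ 1 := by
    have : (1:ℝ) - g x ≤ 1 := by linarith
    nlinarith
  have hstep1 : lam * δ₁ ≤ lam / q := by
    rw [div_eq_mul_inv]
    exact mul_le_mul_of_nonneg_left hinf hlam.le
  have hstep2 : lam / q ≤ lam / (p * q) := by
    rw [div_le_div_iff₀ hqpos (by positivity)]
    exact mul_le_mul_of_nonneg_left (mul_le_of_le_one_left hq0 hp1) hlam.le
  calc lam * δ₁ ≤ lam / q := hstep1
    _ ≤ lam / (p * q) := hstep2
    _ = nonlocalRHS lam chi Ω g x := rfl

lemma key_bound {n : ℕ} (hn : 1 ≤ n) {Ω : Set (EuclideanSpace ℝ (Fin n))}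
    (hopen : IsOpen Ω) {R lam chi δ₁ T : ℝ} (hR : 0 < R) (hlam : 0 < lam)
    (hδ₁ : 0 < δ₁)
    (hball : ball (0 : EuclideanSpace ℝ (Fin n)) R ⊆ Ω)
    {u₀ : EuclideanSpace ℝ (Fin n) → ℝ}
    {u : EuclideanSpace ℝ (Fin n) → ℝ → ℝ}
    (hsol : IsSolutionP lam chi Ω u₀ u T)
    (hnonneg : ∀ x ∈ closure Ω, ∀ t ∈ Ioo (0:ℝ) T, 0 ≤ u x t)
    (hinf : ∀ t ∈ Ioo (0:ℝ) T,
      δ₁ ≤ ((1 + chi * ∫ z in Ω, 1 / (1 - u z t)) ^ 2)⁻¹)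
    {t₀ t₁ : ℝ} (ht₀ : 0 < t₀) (h01 : t₀ < t₁) (h1T : t₁ < T) :
    lam * δ₁ / (2 * n / R ^ 2) *
      (1 - Real.exp (-(2 * n / R ^ 2) * (t₁ - t₀))) < 1 := by
  classical
  have hn1 : (1:ℝ) ≤ n := by exact_mod_cast hn
  have hn' : (0:ℝ) < n := by linarith
  have hR2 : (0:ℝ) < R ^ 2 := by positivity
  set α := lam * δ₁ with hα
  set β := 2 * (n:ℝ) / R ^ 2 with hβ
  have hβpos : 0 < β := by rw [hβ]; positivity
  have hαpos : 0 < α := by rw [hα]; positivity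
  set σ : ℝ → ℝ := fun s => α / β * (1 - Real.exp (-β * s)) with hσdef
  have hσd : ∀ s : ℝ, HasDerivAt σ (α * Real.exp (-β * s)) s := by
    intro s
    have h1 : HasDerivAt (fun r : ℝ => -β * r) (-β) s := by
      simpa using (hasDerivAt_id s).const_mul (-β)
    have h2 : HasDerivAt (fun r : ℝ => Real.exp (-β * r)) (Real.exp (-β * s) * (-β)) s :=
      (Real.hasDerivAt_exp (-β * s)).comp s h1
    have h3 := (h2.const_sub 1).const_mul (α / β)
    refine h3.congr_deriv ?_
    have hβne : β ≠ 0 := hβpos.ne'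
    rw [div_mul_eq_mul_div, div_eq_iff hβne]
    ring
  have hσ0 : σ 0 = 0 := by simp [hσdef]
  have hid : ∀ s : ℝ, β * σ s + α * Real.exp (-β * s) = α := by
    intro s
    simp only [hσdef]
    field_simp
    ring
  have hcb : closedBall (0 : EuclideanSpace ℝ (Fin n)) R ⊆ closure Ω := by
    rw [← closure_ball (0 : EuclideanSpace ℝ (Fin n)) (ne_of_gt hR)]
    exact closure_mono hball
  have hIcc : Icc t₀ t₁ ⊆ Ioo 0 T := fun t ht =>
    ⟨lt_of_lt_of_le ht₀ ht.1, lt_of_le_of_lt ht.2 h1T⟩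
  have h0cb : (0 : EuclideanSpace ℝ (Fin n)) ∈ closedBall (0 : EuclideanSpace ℝ (Fin n)) R :=
    mem_closedBall_self hR.le
  have main : ∀ ε > 0, ∀ x ∈ closedBall (0 : EuclideanSpace ℝ (Fin n)) R, ∀ t ∈ Icc t₀ t₁,
      0 ≤ u x t - σ (t - t₀) * (1 - ‖x‖ ^ 2 / R ^ 2) + ε * (t - t₀) := by
    intro ε hε
    set w : EuclideanSpace ℝ (Fin n) × ℝ → ℝ :=
      fun p => u p.1 p.2 - σ (p.2 - t₀) * (1 - ‖p.1‖ ^ 2 / R ^ 2) + ε * (p.2 - t₀) with hwdef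
    set K := closedBall (0 : EuclideanSpace ℝ (Fin n)) R ×ˢ Icc t₀ t₁ with hKdef
    have hKsub : K ⊆ closure Ω ×ˢ Ioo 0 T := prod_mono hcb hIcc
    have hKc : IsCompact K := (isCompact_closedBall _ _).prod isCompact_Icc
    have hKne : K.Nonempty := ⟨(0, t₀), mem_prod.2 ⟨h0cb, ⟨le_refl _, h01.le⟩⟩⟩
    have hσc : Continuous σ := by
      rw [hσdef]; fun_prop
    have hwc : ContinuousOn w K := by
      apply ContinuousOn.add
      · apply ContinuousOn.sub (hsol.cont.mono hKsub)
        exact ((hσc.comp (continuous_snd.sub continuous_const)).mul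
          (continuous_const.sub ((continuous_fst.norm.pow 2).div_const _))).continuousOn
      · exact (continuous_const.mul (continuous_snd.sub continuous_const)).continuousOn
    obtain ⟨p, hpK, hpmin⟩ := hKc.exists_isMinOn hKne hwc
    have hpmin' : ∀ q ∈ K, w p ≤ w q := fun q hq => hpmin hq
    rcases le_or_gt 0 (w p) with hwp | hwp
    · intro x hx t ht
      exact le_trans hwp (hpmin' (x, t) (mem_prod.2 ⟨hx, ht⟩))
    · exfalso
      obtain ⟨xs, ts⟩ := p
      have hxscb : xs ∈ closedBall (0 : EuclideanSpace ℝ (Fin n)) R := (mem_prod.1 hpK).1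
      have htsI : ts ∈ Icc t₀ t₁ := (mem_prod.1 hpK).2
      have htsIoo : ts ∈ Ioo 0 T := hIcc htsI
      have hxsR : ‖xs‖ ≤ R := mem_closedBall_zero_iff.1 hxscb
      have huxs : 0 ≤ u xs ts := hnonneg xs (hcb hxscb) ts htsIoo
      have hxslt : ‖xs‖ < R := by
        rcases lt_or_eq_of_le hxsR with h | h
        · exact h
        · exfalso
          have hval : w (xs, ts) = u xs ts + ε * (ts - t₀) := by
            simp only [hwdef]
            rw [h, div_self (ne_of_gt hR2)]
            ring
          have : 0 ≤ ε * (ts - t₀) := mul_nonneg hε.le (by linarith [htsI.1])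
          rw [hval] at hwp
          linarith
      have hts0 : t₀ < ts := by
        rcases lt_or_eq_of_le htsI.1 with h | h
        · exact h
        · exfalso
          have hval : w (xs, ts) = u xs ts := by
            simp only [hwdef]
            rw [← h, sub_self, hσ0]
            ring
          rw [hval] at hwp
          linarith
      set g : EuclideanSpace ℝ (Fin n) → ℝ := fun y => u y ts with hgdef
      have hg2 : ContDiffOn ℝ 2 g Ω := hsol.space_reg ts htsIoo
      have hxsΩ : xs ∈ Ω := hball (mem_ball_zero_iff.2 hxslt)
      set σs := σ (ts - t₀) with hσs
      have hBi : ∀ i : Fin n,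
          0 ≤ fderiv ℝ (fun y => fderiv ℝ g y (EuclideanSpace.single i 1)) xs
              (EuclideanSpace.single i 1) + σs / R ^ 2 * 2 := by
        intro i
        set v : EuclideanSpace ℝ (Fin n) := EuclideanSpace.single i 1 with hv
        obtain ⟨hev, hd2⟩ := second_dir_deriv' hopen hg2 hxsΩ v
        have hv1 : ‖v‖ = 1 := by
          rw [hv]; simpa using EuclideanSpace.norm_single i (1:ℝ)
        have hxsq : ∀ r : ℝ, ‖xs + r • v‖ ^ 2
            = ‖xs‖ ^ 2 + 2 * (inner ℝ xs v : ℝ) * r + r ^ 2 := by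
          intro r
          rw [norm_add_sq_real, real_inner_smul_right, norm_smul, hv1, Real.norm_eq_abs,
            mul_one, sq_abs]
          ring
        have hpoly : ∀ s : ℝ, HasDerivAt (fun r : ℝ => σs / R ^ 2 * ‖xs + r • v‖ ^ 2)
            (σs / R ^ 2 * (2 * (inner ℝ xs v : ℝ) + 2 * s)) s := by
          intro s
          have h1 : HasDerivAt (fun r : ℝ => r ^ 2) (2 * s) s := by
            simpa using hasDerivAt_pow 2 s
          have h2 : HasDerivAt (fun r : ℝ => 2 * (inner ℝ xs v : ℝ) * r)
              (2 * (inner ℝ xs v : ℝ)) s := by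
            simpa using (hasDerivAt_id s).const_mul (2 * (inner ℝ xs v : ℝ))
          have h3 : HasDerivAt (fun r : ℝ => ‖xs‖ ^ 2 + 2 * (inner ℝ xs v : ℝ) * r + r ^ 2)
              (2 * (inner ℝ xs v : ℝ) + 2 * s) s := by
            exact (h2.const_add (‖xs‖ ^ 2)).add h1
          have h4 := h3.const_mul (σs / R ^ 2)
          have hfe : (fun r : ℝ => σs / R ^ 2 * ‖xs + r • v‖ ^ 2)
              = fun r : ℝ => σs / R ^ 2 * (‖xs‖ ^ 2 + 2 * (inner ℝ xs v : ℝ) * r + r ^ 2) :=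
            funext fun r => by rw [hxsq r]
          rw [hfe]
          exact h4
        set C : ℝ := ε * (ts - t₀) - σs with hC
        set h_i : ℝ → ℝ := fun s => g (xs + s • v) + σs / R ^ 2 * ‖xs + s • v‖ ^ 2 + C
          with hhi
        have hwi : ∀ s : ℝ, h_i s = w (xs + s • v, ts) := by
          intro s
          simp only [hhi, hwdef, hgdef, hC]
          ring
        have hloc : IsLocalMin h_i 0 := by
          have hev2 : ∀ᶠ s in 𝓝 (0:ℝ), ‖xs + s • v‖ < R := by
            have hc : Continuous (fun s : ℝ => ‖xs + s • v‖) :=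
              (continuous_const.add (continuous_id.smul continuous_const)).norm
            have h0n : ‖xs + (0:ℝ) • v‖ < R := by simpa using hxslt
            exact hc.continuousAt.eventually_lt continuousAt_const h0n
          filter_upwards [hev2] with s hs
          have hmem : (xs + s • v, ts) ∈ K :=
            mem_prod.2 ⟨ball_subset_closedBall (mem_ball_zero_iff.2 hs), htsI⟩
          have h0' : h_i 0 = w (xs, ts) := by
            rw [hwi 0]; simp
          rw [h0', hwi s]
          exact hpmin' _ hmem
        have hev' : ∀ᶠ s in 𝓝 (0:ℝ), HasDerivAt h_i
            (fderiv ℝ g (xs + s • v) v + σs / R ^ 2 * (2 * (inner ℝ xs v : ℝ) + 2 * s)) s := by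
          filter_upwards [hev] with s hs
          exact (hs.add (hpoly s)).add_const C
        have hd2' : HasDerivAt
            (fun s : ℝ => fderiv ℝ g (xs + s • v) v
              + σs / R ^ 2 * (2 * (inner ℝ xs v : ℝ) + 2 * s))
            (fderiv ℝ (fun y => fderiv ℝ g y v) xs v + σs / R ^ 2 * 2) 0 := by
          have h5 : HasDerivAt (fun s : ℝ => 2 * (inner ℝ xs v : ℝ) + 2 * s) 2 0 := by
            simpa using ((hasDerivAt_id (0:ℝ)).const_mul 2).const_add (2 * (inner ℝ xs v : ℝ))
          exact hd2.add (by simpa using h5.const_mul (σs / R ^ 2))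
        exact second_deriv_nonneg_of_isLocalMin' hev' hd2' hloc
      have hlap : -(β * σs) ≤ lap g xs := by
        have hsum : ∑ _i : Fin n, -(σs / R ^ 2 * 2) ≤ lap g xs := by
          unfold lap
          exact Finset.sum_le_sum (fun i _ => by have := hBi i; linarith)
        rw [Finset.sum_const, Finset.card_univ, Fintype.card_fin, nsmul_eq_mul] at hsum
        have hnc : (n : ℝ) * -(σs / R ^ 2 * 2) = -(β * σs) := by
          rw [hβ]; field_simp
        rw [hnc] at hsum
        exact hsum
      set φs : ℝ := 1 - ‖xs‖ ^ 2 / R ^ 2 with hφs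
      have hφs1 : φs ≤ 1 := by
        rw [hφs]
        have : 0 ≤ ‖xs‖ ^ 2 / R ^ 2 := by positivity
        linarith
      have hψd : HasDerivAt (fun t => u xs t - σ (t - t₀) * φs + ε * (t - t₀))
          (lap g xs + nonlocalRHS lam chi Ω g xs
            - α * Real.exp (-β * (ts - t₀)) * φs + ε) ts := by
        have hu := hsol.pde xs hxsΩ ts htsIoo
        have hσ' : HasDerivAt (fun t : ℝ => σ (t - t₀)) (α * Real.exp (-β * (ts - t₀))) ts := by
          have := (hσd (ts - t₀)).comp ts ((hasDerivAt_id ts).sub_const t₀)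
          simpa [Function.comp_def] using this
        have hε' : HasDerivAt (fun t : ℝ => ε * (t - t₀)) ε ts := by
          simpa using ((hasDerivAt_id ts).sub_const t₀).const_mul ε
        exact (hu.sub (hσ'.mul_const φs)).add hε'
      have hψmin : ∀ t ∈ Ico t₀ ts,
          (fun t => u xs t - σ (t - t₀) * φs + ε * (t - t₀)) ts
          ≤ (fun t => u xs t - σ (t - t₀) * φs + ε * (t - t₀)) t := by
        intro t ht
        have h1 : (xs, t) ∈ K := mem_prod.2 ⟨hxscb, ⟨ht.1, le_trans ht.2.le htsI.2⟩⟩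
        exact hpmin' (xs, t) h1
      have hd0 := deriv_nonpos_of_left_min' hts0 hψd hψmin
      have hf : α ≤ nonlocalRHS lam chi Ω g xs := by
        rw [hα]
        exact rhs_lower' hlam hδ₁ huxs (hsol.lt_one xs (hcb hxscb) ts htsIoo)
          (hinf ts htsIoo)
      have hexp0 : 0 ≤ α * Real.exp (-β * (ts - t₀)) := by positivity
      have hidts := hid (ts - t₀)
      have hφsle : α * Real.exp (-β * (ts - t₀)) * φs ≤ α * Real.exp (-β * (ts - t₀)) :=
        mul_le_of_le_one_right hexp0 hφs1
      rw [← hσs] at hidts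
      linarith
  have hle : σ (t₁ - t₀) ≤ u 0 t₁ := by
    have hden : 0 < t₁ - t₀ := sub_pos.2 h01
    have h1 : ∀ ε' > (0:ℝ), σ (t₁ - t₀) ≤ u 0 t₁ + ε' := by
      intro ε' hε'
      have h2 := main (ε' / (t₁ - t₀)) (by positivity) 0 h0cb t₁ ⟨h01.le, le_refl _⟩
      rw [norm_zero] at h2
      have h3 : ε' / (t₁ - t₀) * (t₁ - t₀) = ε' := div_mul_cancel₀ _ (ne_of_gt hden)
      have h4 : ((0:ℝ) ^ 2 / R ^ 2) = 0 := by simp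
      rw [h4] at h2
      rw [h3] at h2
      linarith
    by_contra hcon
    push_neg at hcon
    have := h1 ((σ (t₁ - t₀) - u 0 t₁) / 2) (by linarith)
    linarith
  have h0cl : (0 : EuclideanSpace ℝ (Fin n)) ∈ closure Ω :=
    subset_closure (hball (mem_ball_self hR))
  have hu1 : u 0 t₁ < 1 := hsol.lt_one 0 h0cl t₁ ⟨lt_trans ht₀ h01, h1T⟩
  have : σ (t₁ - t₀) < 1 := lt_of_le_of_lt hle hu1
  simpa [hσdef] using this


/-- Lemma 7: upper bound on the existence time.  If `B_R ⊂ Ω`,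
`0 ≤ u < 1` solves (P_λ) on `Ω × (0,T)` with the nonlocal integral uniformly bounded,
`A(t) = (1 + χ∫_Ω dz/(1-u(z,t)))⁻²`, `0 < δ₁ ≤ inf A(t)` and `λ > 2n/(δ₁R²)`,
then `T ≤ (1/(λδ₁))(1 - 2n/(λδ₁R²))⁻¹`. -/
theorem statement6 {n : ℕ} (hn : 1 ≤ n) (Ω : Set (EuclideanSpace ℝ (Fin n)))
    (hopen : IsOpen Ω) (hbdd : Bornology.IsBounded Ω)
    (R lam chi a δ₁ T : ℝ) (hR : 0 < R) (hlam : 0 < lam) (hchi : 0 < chi)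
    (ha : 0 < a) (ha1 : a < 1) (hT : 0 < T)
    (hball : ball (0 : EuclideanSpace ℝ (Fin n)) R ⊆ Ω)
    (u₀ : EuclideanSpace ℝ (Fin n) → ℝ)
    (hu₀ : ∀ x ∈ Ω, 0 ≤ u₀ x ∧ u₀ x ≤ a)
    (u : EuclideanSpace ℝ (Fin n) → ℝ → ℝ)
    (hsol : IsSolutionP lam chi Ω u₀ u T)
    (hnonneg : ∀ x ∈ closure Ω, ∀ t ∈ Ioo (0:ℝ) T, 0 ≤ u x t)
    (hsup : ∃ M : ℝ, ∀ t ∈ Ioo (0:ℝ) T, (∫ z in Ω, 1 / (1 - u z t)) ≤ M)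
    (hδ₁ : 0 < δ₁)
    (hinf : ∀ t ∈ Ioo (0:ℝ) T,
      δ₁ ≤ ((1 + chi * ∫ z in Ω, 1 / (1 - u z t)) ^ 2)⁻¹)
    (hlam' : 2 * (n : ℝ) / (δ₁ * R ^ 2) < lam) :
    T ≤ 1 / (lam * δ₁) * (1 - 2 * (n : ℝ) / (lam * δ₁ * R ^ 2))⁻¹ := by
  have hn1 : (1:ℝ) ≤ n := by exact_mod_cast hn
  have hn' : (0:ℝ) < n := by linarith
  have hR2 : (0:ℝ) < R ^ 2 := by positivity
  set α := lam * δ₁ with hα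
  set β := 2 * (n:ℝ) / R ^ 2 with hβ
  have hβpos : 0 < β := by rw [hβ]; positivity
  have hαpos : 0 < α := by rw [hα]; positivity
  have hαβ : β < α := by
    rw [hβ, hα]
    rw [div_lt_iff₀ hR2]
    rw [div_lt_iff₀ (by positivity)] at hlam'
    nlinarith
  have hγ : 0 < α - β := sub_pos.2 hαβ
  have hfinal : ∀ s : ℝ, 0 < s → s < T → α / β * (1 - Real.exp (-β * s)) < 1 := by
    intro s hs hsT
    have h1 : (0:ℝ) < (T - s) / 2 := by linarith
    have h2 := key_bound hn hopen hR hlam hδ₁ hball hsol hnonneg hinf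
      (t₀ := (T - s) / 2) (t₁ := (T - s) / 2 + s) h1 (by linarith) (by linarith)
    have h3 : (T - s) / 2 + s - (T - s) / 2 = s := by ring
    rw [h3] at h2
    rw [hα, hβ]
    exact h2
  have hTle : T ≤ 1 / (α - β) := by
    by_contra hcon
    push_neg at hcon
    set s := (1 / (α - β) + T) / 2 with hs
    have hs1 : 1 / (α - β) < s := by rw [hs]; linarith
    have hs2 : s < T := by rw [hs]; linarith
    have hs0 : 0 < s := lt_trans (by positivity) hs1
    have hσs := hfinal s hs0 hs2
    have hE : (α - β) / α < Real.exp (-β * s) := by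
      rw [div_mul_eq_mul_div, div_lt_one hβpos] at hσs
      rw [div_lt_iff₀ hαpos]
      nlinarith
    have hlog : β * s < Real.log (α / (α - β)) := by
      have h3 := Real.log_lt_log (by positivity) hE
      rw [Real.log_exp] at h3
      have h4 : Real.log (α / (α - β)) = - Real.log ((α - β) / α) := by
        rw [← Real.log_inv, inv_div]
      rw [h4]
      linarith
    have hlog2 : Real.log (α / (α - β)) ≤ β / (α - β) := by
      have h5 := Real.log_le_sub_one_of_pos (x := α / (α - β)) (by positivity)
      have h6 : α / (α - β) - 1 = β / (α - β) := by field_simp; ring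
      linarith
    have hslt : s < 1 / (α - β) := by
      have h7 : β * s < β * (1 / (α - β)) := by
        have h8 : β * (1 / (α - β)) = β / (α - β) := by ring
        rw [h8]
        linarith
      exact lt_of_mul_lt_mul_left h7 hβpos.le
    linarith
  have hRHS : 1 / (lam * δ₁) * (1 - 2 * (n : ℝ) / (lam * δ₁ * R ^ 2))⁻¹ = 1 / (α - β) := by
    rw [hα, hβ]
    have hne1 : lam * δ₁ ≠ 0 := by positivity
    have hne2 : lam * δ₁ * R ^ 2 - 2 * (n:ℝ) > 0 := by
      have h := hαβ
      rw [hβ, hα, div_lt_iff₀ hR2] at h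
      linarith
    have hne3 : lam * δ₁ - 2 * (n:ℝ) / R ^ 2 > 0 := by
      have h := hαβ
      rw [hβ, hα] at h
      linarith
    have hne2' : lam * δ₁ * R ^ 2 - 2 * (n:ℝ) ≠ 0 := ne_of_gt hne2
    have hne3' : lam * δ₁ - 2 * (n:ℝ) / R ^ 2 ≠ 0 := ne_of_gt hne3
    have hR0 : R ≠ 0 := ne_of_gt hR
    field_simp

  rw [hRHS]
  exact hTle
end

section
/- Let n ≥ 1, R > 0, λ > 0, δ₁ > 0 be constants with λδ₁ > 2n/R², and set c₀ = 1 − 2n/(λδ₁R²). Define ψ(x,t) = 1 − λδ₁c₀ t (1 − |x|²/R²) for x ∈ ℝⁿ and t ≥ 0. Then ψ > 0 on cl(B_R)×[0, 1/(λδ₁c₀)), and ψ satisfies ∂ψ/∂t − Δψ + λδ₁ψ^{−2} ≥ 0 at every point of B_R×(0, 1/(λδ₁c₀)); i.e., ψ is a supersolution of ψ_t = Δψ − λδ₁ψ^{−2} there. -/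
open MeasureTheory Metric Set Filter Topology

private lemma fd1 {n : ℕ} (c d : ℝ) (y v : EuclideanSpace ℝ (Fin n)) :
    fderiv ℝ (fun y => c + d * ‖y‖ ^ 2) y v = 2 * d * (inner ℝ y v : ℝ) := by
  have hfun : (fun y : EuclideanSpace ℝ (Fin n) => c + d * ‖y‖ ^ 2)
      = fun y : EuclideanSpace ℝ (Fin n) => c + d * (inner ℝ y y : ℝ) := by
    funext z; rw [real_inner_self_eq_norm_sq]
  have hdiff : DifferentiableAt ℝ (fun z : EuclideanSpace ℝ (Fin n) => (inner ℝ z z : ℝ)) y :=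
    differentiableAt_id.inner ℝ differentiableAt_id
  rw [hfun, fderiv_const_add, fderiv_const_mul hdiff]
  have h := fderiv_inner_apply ℝ (f := fun z : EuclideanSpace ℝ (Fin n) => z)
    (g := fun z : EuclideanSpace ℝ (Fin n) => z) differentiableAt_id differentiableAt_id (x := y) v
  simp only [ContinuousLinearMap.smul_apply, smul_eq_mul, h, fderiv_id', ContinuousLinearMap.id_apply]
  rw [real_inner_comm v y]; ring

lemma fd2 {n : ℕ} (d : ℝ) (x w v : EuclideanSpace ℝ (Fin n)) :
    fderiv ℝ (fun y => 2 * d * (inner ℝ y w : ℝ)) x v = 2 * d * (inner ℝ v w : ℝ) := by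
  have hdiff : DifferentiableAt ℝ (fun z : EuclideanSpace ℝ (Fin n) => (inner ℝ z w : ℝ)) x :=
    differentiableAt_id.inner ℝ (differentiableAt_const w)
  rw [fderiv_const_mul hdiff]
  have h := fderiv_inner_apply ℝ (f := fun z : EuclideanSpace ℝ (Fin n) => z)
    (g := fun _ : EuclideanSpace ℝ (Fin n) => w) differentiableAt_id (differentiableAt_const w) (x := x) v
  simp only [ContinuousLinearMap.smul_apply, smul_eq_mul, h, fderiv_id', fderiv_fun_const,
    ContinuousLinearMap.id_apply, Pi.zero_apply, ContinuousLinearMap.zero_apply,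
    inner_zero_right, zero_add]

lemma lap_eq {n : ℕ} (c d : ℝ) (x : EuclideanSpace ℝ (Fin n)) :
    lap (fun y => c + d * ‖y‖ ^ 2) x = (n : ℝ) * (2 * d) := by
  unfold lap
  have key : ∀ i : Fin n, fderiv ℝ (fun y => fderiv ℝ (fun y => c + d * ‖y‖ ^ 2) y
      (EuclideanSpace.single i 1)) x (EuclideanSpace.single i 1) = 2 * d := by
    intro i
    have hfun : (fun y : EuclideanSpace ℝ (Fin n) => fderiv ℝ (fun y => c + d * ‖y‖ ^ 2) y
        (EuclideanSpace.single i 1))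
        = fun y => 2 * d * (inner ℝ y (EuclideanSpace.single i 1) : ℝ) := by
      funext z; exact fd1 c d z _
    rw [hfun, fd2]
    have h1 : (inner ℝ (EuclideanSpace.single i (1:ℝ)) (EuclideanSpace.single i (1:ℝ)) : ℝ) = 1 := by
      simp [EuclideanSpace.inner_single_left, EuclideanSpace.single_apply]
    rw [h1, mul_one]
  rw [Finset.sum_congr rfl fun i _ => key i]
  simp [mul_comm]

/-- the explicit supersolution in the proof of Lemma 7.
With `c₀ = 1 - 2n/(λδ₁R²) > 0` and `ψ(x,t) = 1 - λδ₁c₀t(1-|x|²/R²)`, the function `ψ`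
is positive on `cl(B_R) × [0, 1/(λδ₁c₀))` and satisfies
`ψ_t - Δψ + λδ₁ψ⁻² ≥ 0` on `B_R × (0, 1/(λδ₁c₀))`. -/
theorem statement7 {n : ℕ} (hn : 1 ≤ n) (R lam δ₁ c₀ : ℝ)
    (hR : 0 < R) (hlam : 0 < lam) (hδ₁ : 0 < δ₁)
    (hbig : 2 * (n : ℝ) / R ^ 2 < lam * δ₁)
    (hc₀ : c₀ = 1 - 2 * (n : ℝ) / (lam * δ₁ * R ^ 2))
    (ψ : EuclideanSpace ℝ (Fin n) → ℝ → ℝ)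
    (hψ : ψ = fun x t => 1 - lam * δ₁ * c₀ * t * (1 - ‖x‖ ^ 2 / R ^ 2)) :
    (∀ x : EuclideanSpace ℝ (Fin n), ‖x‖ ≤ R →
        ∀ t : ℝ, 0 ≤ t → t < 1 / (lam * δ₁ * c₀) → 0 < ψ x t) ∧
    (∀ x : EuclideanSpace ℝ (Fin n), ‖x‖ < R →
        ∀ t : ℝ, 0 < t → t < 1 / (lam * δ₁ * c₀) →
          0 ≤ deriv (fun s => ψ x s) t - lap (fun y => ψ y t) x
              + lam * δ₁ / (ψ x t) ^ 2) := by
  subst hψ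
  have hR2 : (0:ℝ) < R ^ 2 := by positivity
  have h1 : 2 * (n:ℝ) < lam * δ₁ * R ^ 2 := by
    rw [div_lt_iff₀ hR2] at hbig; linarith
  have hc₀pos : 0 < c₀ := by
    rw [hc₀]
    have : 2 * (n:ℝ) / (lam * δ₁ * R ^ 2) < 1 := by
      rw [div_lt_one (by positivity)]; exact h1
    linarith
  have hA : 0 < lam * δ₁ * c₀ := by positivity
  have hpos : ∀ x : EuclideanSpace ℝ (Fin n), ‖x‖ ≤ R → ∀ t : ℝ, 0 ≤ t →
      t < 1 / (lam * δ₁ * c₀) → 0 < 1 - lam * δ₁ * c₀ * t * (1 - ‖x‖ ^ 2 / R ^ 2) := by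
    intro x hx t ht htlt
    have hAt : lam * δ₁ * c₀ * t < 1 := by
      rw [lt_div_iff₀ hA] at htlt; linarith
    have hx2 : ‖x‖ ^ 2 ≤ R ^ 2 := by nlinarith [norm_nonneg x]
    have hK0 : 0 ≤ 1 - ‖x‖ ^ 2 / R ^ 2 := by
      have : ‖x‖ ^ 2 / R ^ 2 ≤ 1 := by rw [div_le_one hR2]; exact hx2
      linarith
    have hK1 : 1 - ‖x‖ ^ 2 / R ^ 2 ≤ 1 := by
      have : 0 ≤ ‖x‖ ^ 2 / R ^ 2 := by positivity
      linarith
    have h2 : lam * δ₁ * c₀ * t * (1 - ‖x‖ ^ 2 / R ^ 2) ≤ lam * δ₁ * c₀ * t * 1 :=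
      mul_le_mul_of_nonneg_left hK1 (by positivity)
    nlinarith
  constructor
  · exact hpos
  · intro x hx t ht htlt
    have hAt : lam * δ₁ * c₀ * t < 1 := by
      rw [lt_div_iff₀ hA] at htlt; linarith
    have hx2 : ‖x‖ ^ 2 ≤ R ^ 2 := by nlinarith [norm_nonneg x]
    have hK0 : 0 ≤ 1 - ‖x‖ ^ 2 / R ^ 2 := by
      have : ‖x‖ ^ 2 / R ^ 2 ≤ 1 := by rw [div_le_one hR2]; exact hx2
      linarith
    have hK1 : 1 - ‖x‖ ^ 2 / R ^ 2 ≤ 1 := by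
      have : 0 ≤ ‖x‖ ^ 2 / R ^ 2 := by positivity
      linarith
    have hψpos := hpos x hx.le t ht.le htlt
    have hd : HasDerivAt (fun s : ℝ => 1 - lam * δ₁ * c₀ * s * (1 - ‖x‖ ^ 2 / R ^ 2))
        (-(lam * δ₁ * c₀ * (1 - ‖x‖ ^ 2 / R ^ 2))) t := by
      have h := (((hasDerivAt_id t).const_mul (lam * δ₁ * c₀)).mul_const
        (1 - ‖x‖ ^ 2 / R ^ 2)).const_sub 1
      simpa using h
    have hfun : (fun y : EuclideanSpace ℝ (Fin n) =>
        1 - lam * δ₁ * c₀ * t * (1 - ‖y‖ ^ 2 / R ^ 2))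
        = fun y : EuclideanSpace ℝ (Fin n) =>
          (1 - lam * δ₁ * c₀ * t) + (lam * δ₁ * c₀ * t / R ^ 2) * ‖y‖ ^ 2 := by
      funext y; ring
    simp only []
    rw [hd.deriv, hfun, lap_eq]
    have h2nR : 2 * (n:ℝ) / R ^ 2 = lam * δ₁ - lam * δ₁ * c₀ := by
      rw [hc₀]; field_simp; ring
    have hpos2 : 0 < lam * δ₁ - lam * δ₁ * c₀ := by
      rw [← h2nR]
      have hn' : (0:ℝ) < n := by exact_mod_cast hn
      positivity
    have hψle1 : 1 - lam * δ₁ * c₀ * t * (1 - ‖x‖ ^ 2 / R ^ 2) ≤ 1 := by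
      have := mul_nonneg (mul_nonneg hA.le ht.le) hK0
      linarith
    have hQ : lam * δ₁ ≤ lam * δ₁ /
        (1 - lam * δ₁ * c₀ * t * (1 - ‖x‖ ^ 2 / R ^ 2)) ^ 2 := by
      rw [le_div_iff₀ (pow_pos hψpos 2)]
      have hsq : (1 - lam * δ₁ * c₀ * t * (1 - ‖x‖ ^ 2 / R ^ 2)) ^ 2 ≤ 1 := by nlinarith
      have := mul_le_mul_of_nonneg_left hsq (mul_pos hlam hδ₁).le
      linarith
    have hterm : (n:ℝ) * (2 * (lam * δ₁ * c₀ * t / R ^ 2))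
        = (lam * δ₁ * c₀ * t) * (2 * (n:ℝ) / R ^ 2) := by ring
    rw [hterm, h2nR]
    have e1 : lam * δ₁ * c₀ * (1 - ‖x‖ ^ 2 / R ^ 2) ≤ lam * δ₁ * c₀ * 1 :=
      mul_le_mul_of_nonneg_left hK1 hA.le
    have e2 : lam * δ₁ * c₀ * t * (lam * δ₁ - lam * δ₁ * c₀)
        ≤ 1 * (lam * δ₁ - lam * δ₁ * c₀) :=
      mul_le_mul_of_nonneg_right hAt.le hpos2.le
    linarith
end
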